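/- arXiv:1907.02726 — 6 statements merged into one kernel-verified Lean document; each statement's English description precedes it below -/
import Mathlib

section
/- For natural numbers m, n ≥ 1, the Fibonacci polynomial F_m(x) divides F_n(x) if and only if m divides n. -/
noncomputable def fibPoly (R : Type*) [CommRing R] : ℕ → Polynomial R
  | 0 => 0
  | 1 => 1
  | n + 2 => Polynomial.X * fibPoly R (n + 1) + fibPoly R n

open Polynomial

lemma fibPoly_add (R : Type*) [CommRing R] :
    ∀ n m : ℕ, fibPoly R (m + n + 1) =
      fibPoly R (m + 1) * fibPoly R (n + 1) + fibPoly R m * fibPoly R n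
  | 0, m => by simp [fibPoly]
  | 1, m => by
      rw [show fibPoly R (m + 1 + 1) = Polynomial.X * fibPoly R (m + 1) + fibPoly R m from rfl,
        show fibPoly R (1 + 1) = Polynomial.X * 1 + 0 from rfl,
        show fibPoly R 1 = 1 from rfl]
      ring
  | n + 2, m => by
      have h1 := fibPoly_add R n m
      have h2 := fibPoly_add R (n + 1) m
      rw [show fibPoly R (m + (n + 2) + 1) =
            Polynomial.X * fibPoly R (m + (n + 1) + 1) + fibPoly R (m + n + 1) from rfl,
        h2, h1]
      simp only [show fibPoly R (n + 2 + 1) =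
          Polynomial.X * fibPoly R (n + 2) + fibPoly R (n + 1) from rfl,
        show fibPoly R (n + 1 + 1) =
          Polynomial.X * fibPoly R (n + 1) + fibPoly R n from rfl,
        show fibPoly R (n + 2) =
          Polynomial.X * fibPoly R (n + 1) + fibPoly R n from rfl]
      ring

lemma fibPoly_monic (K : Type*) [Field K] :
    ∀ k : ℕ, (fibPoly K (k + 1)).Monic ∧ (fibPoly K (k + 1)).degree = k
  | 0 => by simp [fibPoly, monic_one]
  | 1 => by
      constructor
      · show (Polynomial.X * 1 + 0 : Polynomial K).Monic
        simp [monic_X]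
      · show (Polynomial.X * 1 + 0 : Polynomial K).degree = 1
        simp
  | k + 2 => by
      obtain ⟨hm1, hd1⟩ := fibPoly_monic K (k + 1)
      have hd0 : (fibPoly K (k + 1)).degree = (k : WithBot ℕ) := (fibPoly_monic K k).2
      have hmX : (Polynomial.X * fibPoly K (k + 2)).Monic := monic_X.mul hm1
      have hdX : (Polynomial.X * fibPoly K (k + 2)).degree = ((k + 2 : ℕ) : WithBot ℕ) := by
        rw [degree_mul, degree_X, hd1]
        push_cast
        ring
      have hlt : (fibPoly K (k + 1)).degree < (Polynomial.X * fibPoly K (k + 2)).degree := by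
        rw [hdX, hd0]
        exact_mod_cast by omega
      constructor
      · exact hmX.add_of_left hlt
      · rw [show fibPoly K (k + 2 + 1) =
          Polynomial.X * fibPoly K (k + 2) + fibPoly K (k + 1) from rfl,
          degree_add_eq_left_of_degree_lt hlt, hdX]

lemma fibPoly_degree (K : Type*) [Field K] (a : ℕ) (ha : 1 ≤ a) :
    (fibPoly K a).degree = ((a - 1 : ℕ) : WithBot ℕ) := by
  obtain ⟨j, rfl⟩ := Nat.exists_eq_add_of_le ha
  rw [add_comm, (fibPoly_monic K j).2]
  simp

lemma fibPoly_ne_zero (K : Type*) [Field K] (k : ℕ) (hk : 1 ≤ k) : fibPoly K k ≠ 0 := by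
  obtain ⟨j, rfl⟩ := Nat.exists_eq_add_of_le hk
  rw [add_comm]
  exact (fibPoly_monic K j).1.ne_zero

lemma fibPoly_coprime (K : Type*) [Field K] :
    ∀ k : ℕ, IsCoprime (fibPoly K k) (fibPoly K (k + 1))
  | 0 => by simpa [fibPoly] using isCoprime_zero_left.mpr isUnit_one
  | k + 1 => by
      have ih := (fibPoly_coprime K k).symm
      rw [show fibPoly K (k + 1 + 1) =
        Polynomial.X * fibPoly K (k + 1) + fibPoly K k from rfl]
      have := ih.add_mul_right_right Polynomial.X
      convert this using 1
      · rfl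
      · ring

lemma fibPoly_dvd_mul (K : Type*) [Field K] (m : ℕ) (hm : 1 ≤ m) :
    ∀ q : ℕ, fibPoly K m ∣ fibPoly K (m * q)
  | 0 => by simp [fibPoly]
  | q + 1 => by
      have ih := fibPoly_dvd_mul K m hm q
      have e : m * (q + 1) = m * q + (m - 1) + 1 := by rw [Nat.mul_succ]; omega
      rw [e, fibPoly_add, show m - 1 + 1 = m from by omega]
      exact dvd_add (dvd_mul_left _ _) (ih.mul_right _)

theorem fibPoly_dvd_iff (K : Type*) [Field K] (m n : ℕ) (hm : 1 ≤ m) (hn : 1 ≤ n) :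
    fibPoly K m ∣ fibPoly K n ↔ m ∣ n := by
  constructor
  · intro hdvd
    by_contra hnd
    have hr1 : 1 ≤ n % m := by
      rcases Nat.eq_zero_or_pos (n % m) with h | h
      · exact absurd (Nat.dvd_of_mod_eq_zero h) hnd
      · exact h
    have hrm : n % m < m := Nat.mod_lt _ hm
    have hdq : fibPoly K m ∣ fibPoly K (m * (n / m)) := fibPoly_dvd_mul K m hm _
    have hdr : fibPoly K m ∣ fibPoly K (n % m) := by
      have e : n = m * (n / m) + (n % m - 1) + 1 := by
        have := Nat.div_add_mod n m; omega
      have hadd := fibPoly_add K (n % m - 1) (m * (n / m))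
      rw [← e, show n % m - 1 + 1 = n % m from by omega] at hadd
      have hdmul : fibPoly K m ∣ fibPoly K (m * (n / m) + 1) * fibPoly K (n % m) := by
        have h' : fibPoly K m ∣
            fibPoly K n - fibPoly K (m * (n / m)) * fibPoly K (n % m - 1) :=
          dvd_sub hdvd (hdq.mul_right _)
        rw [hadd] at h'
        simpa using h'
      have hcop : IsCoprime (fibPoly K m) (fibPoly K (m * (n / m) + 1)) :=
        IsCoprime.of_isCoprime_of_dvd_left (fibPoly_coprime K (m * (n / m))) hdq
      exact hcop.dvd_of_dvd_mul_left hdmul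
    have hdeg : (fibPoly K (n % m)).degree < (fibPoly K m).degree := by
      rw [fibPoly_degree K _ hr1, fibPoly_degree K m hm]
      exact_mod_cast by omega
    exact fibPoly_ne_zero K (n % m) hr1
      (Polynomial.eq_zero_of_dvd_of_degree_lt hdr hdeg)
  · rintro ⟨q, rfl⟩
    exact fibPoly_dvd_mul K m hm q
end

section
/- Over F_2, Fibonacci polynomials satisfy the symmetric recursion relation F_{k+l}(x) + F_{k-l}(x) = x·F_k(x)·F_l(x) for all natural numbers k ≥ l. -/
lemma fibPoly_aux (l : ℕ) : ∀ m : ℕ,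
    fibPoly (ZMod 2) (m + 2 * l) + fibPoly (ZMod 2) m =
      Polynomial.X * fibPoly (ZMod 2) (m + l) * fibPoly (ZMod 2) l := by
  have h2 : (2 : Polynomial (ZMod 2)) = 0 := CharTwo.two_eq_zero
  induction l using Nat.strong_induction_on with
  | _ l ih =>
    match l with
    | 0 =>
      intro m
      simp [fibPoly]
      linear_combination h2 * fibPoly (ZMod 2) m
    | 1 =>
      intro m
      have e1 : fibPoly (ZMod 2) (m + 2 * 1) =
          Polynomial.X * fibPoly (ZMod 2) (m + 1) + fibPoly (ZMod 2) m := rfl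
      simp only [fibPoly, e1]
      linear_combination h2 * fibPoly (ZMod 2) m
    | l + 2 =>
      intro m
      have ih1 := ih (l + 1) (by omega) (m + 1)
      have ih0 := ih l (by omega) (m + 2)
      have e1 : fibPoly (ZMod 2) (m + 2 * (l + 2)) =
          Polynomial.X * fibPoly (ZMod 2) (m + 2 * l + 3) + fibPoly (ZMod 2) (m + 2 * l + 2) := by
        show fibPoly (ZMod 2) ((m + 2 * l + 2) + 2) = _
        rfl
      have e2 : fibPoly (ZMod 2) (m + 2) =
          Polynomial.X * fibPoly (ZMod 2) (m + 1) + fibPoly (ZMod 2) m := rfl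
      have e3 : fibPoly (ZMod 2) (l + 2) =
          Polynomial.X * fibPoly (ZMod 2) (l + 1) + fibPoly (ZMod 2) l := rfl
      have h1 : m + 1 + 2 * (l + 1) = m + 2 * l + 3 := by ring
      have h0 : m + 2 + 2 * l = m + 2 * l + 2 := by ring
      have h1' : m + 1 + (l + 1) = m + (l + 2) := by ring
      have h0' : m + 2 + l = m + (l + 2) := by ring
      rw [h1, h1'] at ih1
      rw [h0, h0'] at ih0
      rw [e1, e3]
      linear_combination Polynomial.X * ih1 + ih0 - e2 -
        h2 * (Polynomial.X * fibPoly (ZMod 2) (m + 1))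

theorem fibPoly_symmetric_recursion (k l : ℕ) (hkl : l ≤ k) :
    fibPoly (ZMod 2) (k + l) + fibPoly (ZMod 2) (k - l) =
      Polynomial.X * fibPoly (ZMod 2) k * fibPoly (ZMod 2) l := by
  have := fibPoly_aux l (k - l)
  rw [show k - l + 2 * l = k + l by omega, show k - l + l = k by omega] at this
  exact this
end

section
/- Over F_2, Fibonacci polynomials satisfy the subtractive relation F_{k+1}(x)·F_l(x) + F_k(x)·F_{l+1}(x) = F_{|k-l|}(x) for all natural numbers k, l. -/
lemma fibPoly_aux_s9 (d k : ℕ) :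
    fibPoly (ZMod 2) (k + 1) * fibPoly (ZMod 2) (k + d) +
      fibPoly (ZMod 2) k * fibPoly (ZMod 2) (k + d + 1) = fibPoly (ZMod 2) d := by
  induction k with
  | zero => simp [fibPoly]
  | succ n ih =>
    have h2 : ∀ a : Polynomial (ZMod 2), a + a = 0 := fun a => CharTwo.add_self_eq_zero a
    have e1 : fibPoly (ZMod 2) (n + 2) =
        Polynomial.X * fibPoly (ZMod 2) (n + 1) + fibPoly (ZMod 2) n := rfl
    have e2 : fibPoly (ZMod 2) (n + d + 2) =
        Polynomial.X * fibPoly (ZMod 2) (n + d + 1) + fibPoly (ZMod 2) (n + d) := rfl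
    have : n + 1 + d = n + d + 1 := by ring
    rw [show n + 1 + 1 = n + 2 from rfl, this, show n + d + 1 + 1 = n + d + 2 from rfl,
      e1, e2, ← ih]
    ring_nf
    rw [show (2 : Polynomial (ZMod 2)) = 0 from CharTwo.two_eq_zero]
    ring

theorem fibPoly_subtractive_recursion (k l : ℕ) :
    fibPoly (ZMod 2) (k + 1) * fibPoly (ZMod 2) l +
      fibPoly (ZMod 2) k * fibPoly (ZMod 2) (l + 1) =
      fibPoly (ZMod 2) (Nat.dist k l) := by
  rcases le_total k l with h | h
  · obtain ⟨d, rfl⟩ := Nat.exists_eq_add_of_le h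
    rw [Nat.dist_eq_sub_of_le (Nat.le_add_right k d)]
    simpa [add_comm, mul_comm] using fibPoly_aux_s9 d k
  · obtain ⟨d, rfl⟩ := Nat.exists_eq_add_of_le h
    rw [Nat.dist_comm (l+d) l, Nat.dist_eq_sub_of_le (Nat.le_add_right l d)]
    simpa [add_comm, mul_comm] using fibPoly_aux_s9 d l
end

section
/- Over F_2, x·F_{2^m - 1}(x)·F_{2^m + 1}(x) = x·(x^{2^m - 1} + 1)^2, i.e. the product x·F_{2^m-1}·F_{2^m+1} equals x^{2^{m+1}-1} + x. Consequently every irreducible polynomial over F_2 of degree dividing m divides either F_{2^m - 1}(x) or F_{2^m + 1}(x) or equals x. -/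
open Polynomial

lemma fibPoly_zero (R : Type*) [CommRing R] : fibPoly R 0 = 0 := rfl
lemma fibPoly_one (R : Type*) [CommRing R] : fibPoly R 1 = 1 := rfl
lemma fibPoly_add_two (R : Type*) [CommRing R] (n : ℕ) :
    fibPoly R (n + 2) = X * fibPoly R (n + 1) + fibPoly R n := rfl

lemma fibPoly_addition (R : Type*) [CommRing R] (m n : ℕ) :
    fibPoly R (m + n + 1) =
      fibPoly R (m + 1) * fibPoly R (n + 1) + fibPoly R m * fibPoly R n := by
  induction m using Nat.twoStepInduction with
  | zero => simp [fibPoly_zero, fibPoly_one]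
  | one =>
    rw [show 1 + n + 1 = n + 2 from by ring, fibPoly_add_two,
      show (1:ℕ) + 1 = 2 from rfl, show (2:ℕ) = 0 + 2 from rfl, fibPoly_add_two,
      fibPoly_one, fibPoly_zero]
    ring
  | more m ih ih2 =>
    have h2 : fibPoly R (m + 2) = X * fibPoly R (m + 1) + fibPoly R m := fibPoly_add_two R m
    have h3 : fibPoly R (m + 3) = X * fibPoly R (m + 2) + fibPoly R (m + 1) :=
      fibPoly_add_two R (m + 1)
    rw [show m + 2 + n + 1 = (m + n + 1) + 2 from by ring, fibPoly_add_two,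
      show m + n + 1 + 1 = m + 1 + n + 1 from by ring, ih2, ih,
      show m + 1 + 1 = m + 2 from rfl, show m + 2 + 1 = m + 3 from rfl, h3, h2]
    ring

lemma two_eq_zero' : (2 : Polynomial (ZMod 2)) = 0 := CharTwo.two_eq_zero

lemma fibPoly_cassini (n : ℕ) :
    fibPoly (ZMod 2) n * fibPoly (ZMod 2) (n + 2) = fibPoly (ZMod 2) (n + 1) ^ 2 + 1 := by
  induction n with
  | zero =>
    rw [fibPoly_zero, zero_mul, show (0:ℕ) + 1 = 1 from rfl, fibPoly_one]
    linear_combination -two_eq_zero'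
  | succ n ih =>
    have h2 : fibPoly (ZMod 2) (n + 2) = X * fibPoly (ZMod 2) (n + 1) + fibPoly (ZMod 2) n :=
      fibPoly_add_two _ n
    have h3 : fibPoly (ZMod 2) (n + 3) = X * fibPoly (ZMod 2) (n + 2) + fibPoly (ZMod 2) (n + 1) :=
      fibPoly_add_two _ (n + 1)
    rw [h2] at ih
    rw [show n + 1 + 2 = n + 3 from rfl, show n + 1 + 1 = n + 2 from rfl, h3, h2]
    linear_combination -ih - two_eq_zero'

lemma fibPoly_double (n : ℕ) :
    fibPoly (ZMod 2) (2 * (n + 1)) = X * fibPoly (ZMod 2) (n + 1) ^ 2 := by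
  have h := fibPoly_addition (ZMod 2) (n + 1) n
  have h2 : fibPoly (ZMod 2) (n + 2) = X * fibPoly (ZMod 2) (n + 1) + fibPoly (ZMod 2) n :=
    fibPoly_add_two _ n
  rw [show 2 * (n + 1) = n + 1 + n + 1 from by ring, h, show n + 1 + 1 = n + 2 from rfl, h2]
  linear_combination fibPoly (ZMod 2) n * fibPoly (ZMod 2) (n + 1) * two_eq_zero'

lemma fibPoly_two_pow (m : ℕ) :
    fibPoly (ZMod 2) (2 ^ m) = X ^ (2 ^ m - 1) := by
  induction m with
  | zero => simpa using fibPoly_one (ZMod 2)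
  | succ m ih =>
    obtain ⟨k, hk⟩ : ∃ k, 2 ^ m = k + 1 := ⟨2 ^ m - 1, by have := Nat.one_le_two_pow (n := m); omega⟩
    have : fibPoly (ZMod 2) (2 ^ (m + 1)) = X * fibPoly (ZMod 2) (2 ^ m) ^ 2 := by
      rw [pow_succ, mul_comm (2 ^ m) 2, hk]; exact fibPoly_double k
    rw [this, ih, ← pow_mul, ← pow_succ']
    congr 1
    have h1 : 1 ≤ 2 ^ m := Nat.one_le_two_pow
    have h2 : 2 ^ (m + 1) = 2 * 2 ^ m := by rw [pow_succ]; ring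
    omega

lemma dvd_X_pow_sub_X (p : Polynomial (ZMod 2)) (hirr : Irreducible p) {m : ℕ}
    (hdvd : p.natDegree ∣ m) : p ∣ (X : Polynomial (ZMod 2)) ^ (2 ^ m) - X := by
  haveI : Fact (Irreducible p) := ⟨hirr⟩
  have hp0 : p ≠ 0 := hirr.ne_zero
  letI : Fintype (AdjoinRoot p) := Module.fintypeOfFintype (AdjoinRoot.powerBasis hp0).basis
  have hcard : Fintype.card (AdjoinRoot p) = 2 ^ p.natDegree := by
    rw [Module.card_eq_pow_finrank (K := ZMod 2), ZMod.card,
      (AdjoinRoot.powerBasis hp0).finrank, AdjoinRoot.powerBasis_dim]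
  obtain ⟨c, rfl⟩ := hdvd
  have hroot : (AdjoinRoot.root p) ^ (2 ^ (p.natDegree * c)) = AdjoinRoot.root p := by
    rw [pow_mul, ← hcard]
    exact FiniteField.pow_card_pow c (AdjoinRoot.root p)
  rw [← AdjoinRoot.mk_eq_zero (f := p), map_sub, map_pow, AdjoinRoot.mk_X, hroot, sub_self]

theorem fibPoly_completeness (m : ℕ) :
    (Polynomial.X * fibPoly (ZMod 2) (2 ^ m - 1) * fibPoly (ZMod 2) (2 ^ m + 1) =
        Polynomial.X * (Polynomial.X ^ (2 ^ m - 1) + 1) ^ 2) ∧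
      ∀ p : Polynomial (ZMod 2), Irreducible p → p.natDegree ∣ m →
        p ∣ fibPoly (ZMod 2) (2 ^ m - 1) ∨ p ∣ fibPoly (ZMod 2) (2 ^ m + 1) ∨
          p = Polynomial.X := by
  obtain ⟨k, hk⟩ : ∃ k, 2 ^ m = k + 1 := ⟨2 ^ m - 1, by have := Nat.one_le_two_pow (n := m); omega⟩
  have hk1 : 2 ^ m - 1 = k := by omega
  have hk2 : 2 ^ m + 1 = k + 2 := by omega
  have hpow : fibPoly (ZMod 2) (k + 1) = X ^ k := by
    rw [← hk, fibPoly_two_pow, hk1]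
  have hcas := fibPoly_cassini k
  rw [hpow] at hcas
  have part1 : Polynomial.X * fibPoly (ZMod 2) (2 ^ m - 1) * fibPoly (ZMod 2) (2 ^ m + 1) =
      Polynomial.X * (Polynomial.X ^ (2 ^ m - 1) + 1) ^ 2 := by
    rw [hk1, hk2]
    linear_combination X * hcas - X ^ (k + 1) * two_eq_zero'
  refine ⟨part1, fun p hirr hdvd => ?_⟩
  have hkey : p ∣ (X : Polynomial (ZMod 2)) ^ (2 ^ m) - X := dvd_X_pow_sub_X p hirr hdvd
  have hfact : (X : Polynomial (ZMod 2)) ^ (2 ^ m) - X = X * (X ^ (2 ^ m - 1) + 1) := by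
    rw [CharTwo.sub_eq_add, hk1, hk, pow_succ]
    ring
  have hdvd2 : p ∣ X * fibPoly (ZMod 2) (2 ^ m - 1) * fibPoly (ZMod 2) (2 ^ m + 1) := by
    rw [part1]
    refine hkey.trans ?_
    rw [hfact]
    exact mul_dvd_mul_left X (dvd_pow_self _ two_ne_zero)
  have hprime : Prime p := hirr.prime
  rcases hprime.dvd_mul.mp hdvd2 with h1 | h2
  · rcases hprime.dvd_mul.mp h1 with hx | hf1
    · right; right
      have hmonic : p.Monic := by
        have h0 : p.leadingCoeff ≠ 0 := leadingCoeff_ne_zero.mpr hirr.ne_zero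
        have hall : ∀ a : ZMod 2, a ≠ 0 → a = 1 := by decide
        exact hall _ h0
      exact Polynomial.eq_of_monic_of_associated hmonic monic_X
        (hirr.associated_of_dvd Polynomial.irreducible_X hx)
    · left; exact hf1
  · right; left; exact h2
end

section
/- Let R be a commutative ring and let A, B, C, D be n×n matrices over R that pairwise commute. Then the 2n×2n block matrix [[A,B],[C,D]] is invertible if and only if AD - BC is invertible. -/
open Matrix

private lemma aux_field {K : Type*} [Field K] {n : ℕ}
    (A B C D : Matrix (Fin n) (Fin n) K)
    (hAB : Commute A B) (hAD : Commute A D) (hBC : Commute B C) (hCD : Commute C D)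
    (hM : IsUnit (Matrix.fromBlocks A B C D)) : IsUnit (A * D - B * C) := by
  set M := Matrix.fromBlocks A B C D with hMdef
  obtain ⟨u, hu⟩ := hM
  have hinj : ∀ x, M *ᵥ x = 0 → x = 0 := by
    intro x hx
    have hx2 : x = (↑u⁻¹ : Matrix _ _ K) *ᵥ (M *ᵥ x) := by
      rw [Matrix.mulVec_mulVec, ← hu, Units.inv_mul, Matrix.one_mulVec]
    rw [hx2, hx, Matrix.mulVec_zero]
  rw [Matrix.isUnit_iff_isUnit_det, isUnit_iff_ne_zero]
  intro hdet
  obtain ⟨v, hv, hEv⟩ := (Matrix.exists_mulVec_eq_zero_iff).2 hdet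
  have key : ∀ (P Q : Matrix (Fin n) (Fin n) K),
      M *ᵥ (Sum.elim (P *ᵥ v) (Q *ᵥ v)) =
        Sum.elim ((A * P + B * Q) *ᵥ v) ((C * P + D * Q) *ᵥ v) := by
    intro P Q
    rw [hMdef, Matrix.fromBlocks_mulVec]
    simp [Matrix.mulVec_mulVec, Matrix.add_mulVec]
  -- First: D v = 0 and C v = 0
  have h1 : M *ᵥ (Sum.elim (D *ᵥ v) ((-C) *ᵥ v)) = 0 := by
    rw [key]
    have e1 : A * D + B * -C = A * D - B * C := by (first | noncomm_ring | abel)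
    have e2 : C * D + D * -C = 0 := by
      rw [mul_neg, hCD.eq]; (first | noncomm_ring | abel)
    rw [e1, e2, hEv, Matrix.zero_mulVec]
    ext (i | i) <;> simp
  have h1' := hinj _ h1
  have hDv : D *ᵥ v = 0 := funext fun i => congrFun h1' (Sum.inl i)
  have hCv : C *ᵥ v = 0 := by
    have h : (-C) *ᵥ v = 0 := funext fun i => congrFun h1' (Sum.inr i)
    rw [Matrix.neg_mulVec, neg_eq_zero] at h; exact h
  -- Second: A v = 0 and B v = 0
  have h2 : M *ᵥ (Sum.elim ((-B) *ᵥ v) (A *ᵥ v)) = 0 := by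
    rw [key]
    have e1 : A * -B + B * A = 0 := by
      rw [mul_neg, hAB.eq]; (first | noncomm_ring | abel)
    have e2 : C * -B + D * A = A * D - B * C := by
      rw [mul_neg, hBC.eq, hAD.eq]; (first | noncomm_ring | abel)
    rw [e1, e2, hEv, Matrix.zero_mulVec]
    ext (i | i) <;> simp
  have h2' := hinj _ h2
  have hAv : A *ᵥ v = 0 := funext fun i => congrFun h2' (Sum.inr i)
  -- Now M *ᵥ (v ⊕ 0) = (A v) ⊕ (C v) = 0, so v = 0
  have h3 : M *ᵥ (Sum.elim v 0) = 0 := by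
    rw [hMdef, Matrix.fromBlocks_mulVec]
    simp [hAv, hCv]
  have := hinj _ h3
  apply hv
  funext i
  exact congrFun this (Sum.inl i)

theorem blockMatrix_isUnit_iff (R : Type*) [CommRing R] (n : ℕ)
    (A B C D : Matrix (Fin n) (Fin n) R)
    (hAB : Commute A B) (hAC : Commute A C) (hAD : Commute A D)
    (hBC : Commute B C) (hBD : Commute B D) (hCD : Commute C D) :
    IsUnit (Matrix.fromBlocks A B C D) ↔ IsUnit (A * D - B * C) := by
  constructor
  · intro hM
    rw [Matrix.isUnit_iff_isUnit_det]
    by_contra hE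
    obtain ⟨m, hm, hmem⟩ := (Ideal.span {(A * D - B * C).det}).exists_le_maximal
      (by rwa [Ne, Ideal.span_singleton_eq_top])
    letI := Ideal.Quotient.field m
    let φ : R →+* R ⧸ m := Ideal.Quotient.mk m
    have hMq : IsUnit (Matrix.fromBlocks (A.map φ) (B.map φ) (C.map φ) (D.map φ)) := by
      have := hM.map φ.mapMatrix
      rwa [RingHom.mapMatrix_apply, Matrix.fromBlocks_map] at this
    have hEq : IsUnit ((A.map φ) * (D.map φ) - (B.map φ) * (C.map φ)) := by
      refine aux_field _ _ _ _ ?_ ?_ ?_ ?_ hMq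
      · simpa only [RingHom.mapMatrix_apply] using hAB.map φ.mapMatrix
      · simpa only [RingHom.mapMatrix_apply] using hAD.map φ.mapMatrix
      · simpa only [RingHom.mapMatrix_apply] using hBC.map φ.mapMatrix
      · simpa only [RingHom.mapMatrix_apply] using hCD.map φ.mapMatrix
    have hmap : (A * D - B * C).map φ = (A.map φ) * (D.map φ) - (B.map φ) * (C.map φ) := by
      have h1 := φ.mapMatrix.map_sub (A * D) (B * C)
      have h2 := φ.mapMatrix.map_mul A D
      have h3 := φ.mapMatrix.map_mul B C
      simp only [RingHom.mapMatrix_apply] at h1 h2 h3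
      rw [h1, h2, h3]
    have hunit : IsUnit (φ ((A * D - B * C).det)) := by
      rw [φ.map_det, RingHom.mapMatrix_apply, hmap]
      exact (Matrix.isUnit_iff_isUnit_det _).mp hEq
    have hzero : φ ((A * D - B * C).det) = 0 := by
      rw [Ideal.Quotient.eq_zero_iff_mem]
      exact hmem (Ideal.subset_span rfl)
    exact hunit.ne_zero hzero
  · intro hE
    rw [Matrix.isUnit_iff_isUnit_det]
    have hdet : (Matrix.fromBlocks A B C D).det *
        (Matrix.fromBlocks D (-B) (-C) A).det =
        (A * D - B * C).det * (A * D - B * C).det := by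
      rw [← Matrix.det_mul, Matrix.fromBlocks_multiply]
      have e1 : A * D + B * -C = A * D - B * C := by (first | noncomm_ring | abel)
      have e2 : A * -B + B * A = 0 := by rw [mul_neg, hAB.eq]; (first | noncomm_ring | abel)
      have e3 : C * D + D * -C = 0 := by rw [mul_neg, hCD.eq]; (first | noncomm_ring | abel)
      have e4 : C * -B + D * A = A * D - B * C := by rw [mul_neg, hBC.eq, hAD.eq]; (first | noncomm_ring | abel)
      rw [e1, e2, e3, e4, Matrix.det_fromBlocks_zero₂₁]
    have : IsUnit ((A * D - B * C).det * (A * D - B * C).det) :=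
      ((Matrix.isUnit_iff_isUnit_det _).mp hE).mul ((Matrix.isUnit_iff_isUnit_det _).mp hE)
    rw [← hdet] at this
    exact isUnit_of_mul_isUnit_left this
end

section
/- Let K be a field of characteristic 2, S ∈ M_n(K) with characteristic polynomial χ_S. Then the characteristic polynomial of S' = [[S, I_n],[I_n, 0_n]] ∈ M_{2n}(K) equals x^n · χ_S(x + x⁻¹) (interpreted as the polynomial x^n·χ_S evaluated formally at x - x⁻¹, which is polynomial since the Laurent part cancels); i.e. χ_{S'}(x) = x^n χ_S(x - x^{-1}). -/
open Polynomial Matrix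

theorem charpoly_doubling (K : Type*) [Field K] [CharP K 2] (n : ℕ)
    (S : Matrix (Fin n) (Fin n) K) :
    algebraMap (Polynomial K) (RatFunc K)
        (Matrix.charpoly
          (Matrix.fromBlocks S (1 : Matrix (Fin n) (Fin n) K)
            (1 : Matrix (Fin n) (Fin n) K) (0 : Matrix (Fin n) (Fin n) K))) =
      RatFunc.X ^ n *
        Polynomial.aeval (RatFunc.X - RatFunc.X⁻¹) (Matrix.charpoly S) := by
  classical
  set φ : Polynomial K →+* RatFunc K :=
    (algebraMap (Polynomial K) (RatFunc K) : Polynomial K →+* RatFunc K) with hφ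
  have hX : (RatFunc.X : RatFunc K) ≠ 0 := RatFunc.X_ne_zero
  have hφX : φ Polynomial.X = RatFunc.X := RatFunc.algebraMap_X
  set D : Matrix (Fin n) (Fin n) (RatFunc K) :=
    Matrix.diagonal (fun _ => (RatFunc.X : RatFunc K)) with hD
  set E : Matrix (Fin n) (Fin n) (RatFunc K) :=
    Matrix.diagonal (fun _ => (RatFunc.X⁻¹ : RatFunc K)) with hE
  have key : ((charmatrix (fromBlocks S (1 : Matrix (Fin n) (Fin n) K) 1 0)).map φ) =
      fromBlocks ((charmatrix S).map φ) (-1) (-1) D := by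
    rw [charmatrix_fromBlocks]
    ext (i | i) (j | j) <;>
      simp [charmatrix_apply, Matrix.one_apply, apply_ite φ, hφX,
        diagonal_apply, Matrix.map_apply, hD]
  have hmul : D * E = 1 := by
    rw [hD, hE, Matrix.diagonal_mul_diagonal]
    simp [mul_inv_cancel₀ hX]
  have hmul' : E * D = 1 := by
    rw [hD, hE, Matrix.diagonal_mul_diagonal]
    simp [inv_mul_cancel₀ hX]
  letI : Invertible D := ⟨E, hmul', hmul⟩
  have hinv : ⅟D = E := invOf_eq_right_inv hmul
  rw [Matrix.charpoly, RingHom.map_det, RingHom.mapMatrix_apply, key, Matrix.det_fromBlocks₂₂, hinv]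
  have hdetD : D.det = RatFunc.X ^ n := by
    simp [hD, Fintype.card_fin]
  have hA : (charmatrix S).map φ - (-1 : Matrix (Fin n) (Fin n) (RatFunc K)) * E * (-1) =
      (charmatrix S).map (Polynomial.aeval (RatFunc.X - RatFunc.X⁻¹) :
        Polynomial K →ₐ[K] RatFunc K) := by
    have : (-1 : Matrix (Fin n) (Fin n) (RatFunc K)) * E * (-1) = E := by
      rw [neg_one_mul, mul_neg_one, neg_neg]
    rw [this]
    ext i j
    rcases eq_or_ne i j with h | h
    · subst h
      simp [charmatrix_apply_eq, hφX, hE, hφ]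
      ring
    · simp [charmatrix_apply_ne _ _ _ h, hE, diagonal_apply, h, hφ]
  rw [hdetD, hA]
  congr 1
  rw [Matrix.charpoly, AlgHom.map_det]
  rfl
end
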